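/- Suppose the nonnegative adapted process S (one-dimensional, discrete time) satisfies (E[S_{k+1}|F_k])² ≤ C · Var(S_{k+1}|F_k) a.s. for a constant C (modified above bounded mean-variance tradeoff) and S is a submartingale. Then S has bounded mean-variance tradeoff: (E[ΔS_{k+1}|F_k])² ≤ 4C · Var(ΔS_{k+1}|F_k) a.s., where ΔS_{k+1} = S_{k+1} − S_k. -/

import Mathlib

open MeasureTheory

lemma aux_integrable_mul {Ω : Type*} {m0 : MeasurableSpace Ω} {μ : Measure Ω}
    {f g : Ω → ℝ} (hf : MemLp f 2 μ) (hg : MemLp g 2 μ) :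
    Integrable (fun ω => f ω * g ω) μ := by
  have hint : Integrable (fun ω => f ω ^ 2 + g ω ^ 2) μ :=
    hf.integrable_sq.add hg.integrable_sq
  refine hint.mono' (hf.1.mul hg.1) (Filter.Eventually.of_forall fun ω => ?_)
  have h1 : ‖f ω * g ω‖ = |f ω| * |g ω| := by rw [norm_mul]; rfl
  rw [h1]
  nlinarith [sq_nonneg (|f ω| - |g ω|), abs_nonneg (f ω), abs_nonneg (g ω),
    sq_abs (f ω), sq_abs (g ω), mul_nonneg (abs_nonneg (f ω)) (abs_nonneg (g ω))]

/-- If the nonnegative adapted submartingale `S` satisfies the modified above bounded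
mean-variance tradeoff `(E[S (k+1)|ℱ k])² ≤ C · Var(S (k+1)|ℱ k)` a.s., then `S` has
bounded mean-variance tradeoff: `(E[ΔS (k+1)|ℱ k])² ≤ 4C · Var(ΔS (k+1)|ℱ k)` a.s.,
where `ΔS (k+1) = S (k+1) - S k`. -/
theorem bounded_mean_variance_of_modified_above
    {Ω : Type*} {m0 : MeasurableSpace Ω} (μ : Measure Ω) [IsProbabilityMeasure μ]
    (T : ℕ) (ℱ : Filtration ℕ m0)
    (S : ℕ → Ω → ℝ)
    (hadapted : StronglyAdapted ℱ S)
    (hnonneg : ∀ k ω, 0 ≤ S k ω)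
    (hL2 : ∀ k, MemLp (S k) 2 μ)
    (hsub : Submartingale S ℱ μ)
    (C : ℝ) (hC : 0 < C)
    (hmod : ∀ k < T, ∀ᵐ ω ∂μ,
      ((μ[S (k + 1)|ℱ k]) ω) ^ 2
        ≤ C * ((μ[(fun ω' => S (k + 1) ω' ^ 2)|ℱ k]) ω - ((μ[S (k + 1)|ℱ k]) ω) ^ 2)) :
    ∀ k < T, ∀ᵐ ω ∂μ,
      ((μ[(fun ω' => S (k + 1) ω' - S k ω')|ℱ k]) ω) ^ 2
        ≤ 4 * C * ((μ[(fun ω' => (S (k + 1) ω' - S k ω') ^ 2)|ℱ k]) ω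
            - ((μ[(fun ω' => S (k + 1) ω' - S k ω')|ℱ k]) ω) ^ 2) := by
  intro k hk
  have hbm : StronglyMeasurable[ℱ k] (S k) := hadapted k
  have hintS : Integrable (S (k + 1)) μ := hsub.integrable (k + 1)
  have hintb : Integrable (S k) μ := hsub.integrable k
  have hcb : μ[S k|ℱ k] = S k := condExp_of_stronglyMeasurable (ℱ.le k) hbm hintb
  -- conditional expectation of the increment
  have h1 : μ[(fun ω' => S (k + 1) ω' - S k ω')|ℱ k]
      =ᵐ[μ] fun ω => (μ[S (k + 1)|ℱ k]) ω - S k ω := by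
    have hrfl : (fun ω' => S (k + 1) ω' - S k ω') = S (k + 1) - S k := rfl
    rw [hrfl]
    have := condExp_sub (μ := μ) (m := ℱ k) hintS hintb
    filter_upwards [this] with ω hω
    simp only [Pi.sub_apply] at hω ⊢
    rw [hω, hcb]
  -- conditional expectation of the squared increment
  have hintsq : Integrable (fun ω' => S (k + 1) ω' ^ 2) μ := (hL2 (k + 1)).integrable_sq
  have hintbsq : Integrable (fun ω' => S k ω' ^ 2) μ := (hL2 k).integrable_sq
  have hintmul : Integrable (fun ω' => S k ω' * S (k + 1) ω') μ :=
    aux_integrable_mul (hL2 k) (hL2 (k + 1))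
  have hintmul2 : Integrable (fun ω' => 2 * S k ω' * S (k + 1) ω') μ := by
    have := hintmul.const_mul 2
    exact this.congr (Filter.EventuallyEq.of_eq (funext fun ω' => by ring))
  have hmulc : μ[(fun ω' => (2 * S k ω') * S (k + 1) ω')|ℱ k]
      =ᵐ[μ] fun ω => (2 * S k ω) * (μ[S (k + 1)|ℱ k]) ω := by
    have hsm : StronglyMeasurable[ℱ k] (fun ω' => 2 * S k ω') :=
      stronglyMeasurable_const.mul hbm
    have := condExp_mul_of_stronglyMeasurable_left (μ := μ) hsm
      (show Integrable ((fun ω' => 2 * S k ω') * S (k + 1)) μ from hintmul2) hintS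
    filter_upwards [this] with ω hω
    exact hω
  have hb2 : μ[(fun ω' => S k ω' ^ 2)|ℱ k] = fun ω' => S k ω' ^ 2 :=
    condExp_of_stronglyMeasurable (ℱ.le k) (hbm.pow 2) hintbsq
  have hfun : (fun ω' => (S (k + 1) ω' - S k ω') ^ 2)
      = fun ω' => (S (k + 1) ω' ^ 2 - 2 * S k ω' * S (k + 1) ω') + S k ω' ^ 2 := by
    funext ω'; ring
  have h2 : μ[(fun ω' => (S (k + 1) ω' - S k ω') ^ 2)|ℱ k]
      =ᵐ[μ] fun ω => (μ[(fun ω' => S (k + 1) ω' ^ 2)|ℱ k]) ω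
        - 2 * S k ω * (μ[S (k + 1)|ℱ k]) ω + S k ω ^ 2 := by
    rw [hfun]
    have hrfl2 : (fun ω' => S (k + 1) ω' ^ 2 - 2 * S k ω' * S (k + 1) ω' + S k ω' ^ 2)
        = ((fun ω' => S (k + 1) ω' ^ 2) - fun ω' => 2 * S k ω' * S (k + 1) ω')
          + fun ω' => S k ω' ^ 2 := rfl
    rw [hrfl2]
    have hadd := condExp_add (μ := μ) (m := ℱ k) (hintsq.sub hintmul2) hintbsq
    have hsubx := condExp_sub (μ := μ) (m := ℱ k) hintsq hintmul2
    filter_upwards [hadd, hsubx, hmulc] with ω hω1 hω2 hω3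
    simp only [Pi.add_apply, Pi.sub_apply] at hω1 hω2 hω3 ⊢
    rw [hω1, hω2, hω3, hb2]
  have hle : S k ≤ᵐ[μ] μ[S (k + 1)|ℱ k] := hsub.ae_le_condExp (Nat.le_succ k)
  filter_upwards [h1, h2, hle, hmod k hk] with ω e1 e2 hba hm
  rw [e1, e2]
  have hb0 : 0 ≤ S k ω := hnonneg k ω
  set a := (μ[S (k + 1)|ℱ k]) ω
  set b := S k ω
  set Q := (μ[(fun ω' => S (k + 1) ω' ^ 2)|ℱ k]) ω
  have key : Q - 2 * b * a + b ^ 2 - (a - b) ^ 2 = Q - a ^ 2 := by ring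
  rw [key]
  nlinarith [sq_nonneg a, sq_nonneg (a - b), hm, hC.le, mul_nonneg hb0 (sub_nonneg.mpr hba)]
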